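/- Let R be a (possibly noncommutative) ring and let f₁, f₂, t₁, t₂, v^X, d ∈ R satisfy: f₁ = f₂ + f₂·d·t₁ (vertex dressing), t₁ = t₂ + t₁·d·t₂ (adjoint Bethe–Salpeter equation). Set v^R := t₂ − v^X, t̃ := v^R + t₁·d·v^R, and f* := f₂ + f₂·d·t̃. Then f* = f₁ − f₁·d·v^X. (In other words, the vertex obtained by dressing the bare vertex with the crossed-term-subtracted πN t-matrix equals the full dressed vertex minus the full dressed vertex followed by one crossed interaction.) -/
import Mathlib

/-- The vertex dressed with the crossed-term-subtracted πN t-matrix equals the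
full dressed vertex minus the full dressed vertex followed by one crossed interaction,
i.e. the paper's Eq. (f*). -/
theorem new_vertex_eq {R : Type*} [Ring R] (f₁ f₂ t₁ t₂ vX d : R)
    (hdress : f₁ = f₂ + f₂ * d * t₁)
    (hBS : t₁ = t₂ + t₁ * d * t₂) :
    f₂ + f₂ * d * ((t₂ - vX) + t₁ * d * (t₂ - vX)) = f₁ - f₁ * d * vX := by
  have h : f₂ + f₂ * d * ((t₂ - vX) + t₁ * d * (t₂ - vX)) =
      (f₂ + f₂ * d * (t₂ + t₁ * d * t₂)) - (f₂ + f₂ * d * t₁) * d * vX := by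
    noncomm_ring
  rw [h, ← hBS, ← hdress]
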